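/- arXiv:2507.01521 — 4 statements merged into one kernel-verified Lean document; each statement's English description precedes it below -/
import Mathlib

section
/- Let F be a function on the circle with |F| ≤ 1, supported on a union of k disjoint segments each of length at most 2π/2^m, with mean zero on each segment, and total variation O(k). For j > m, let T = F - 2^{j-2} F * χ_{[-2^{2-j},2^{2-j}]}. Then ∫|T|^2 ≤ C·k/2^j, i.e. the L^2 norm squared of the dyadic Fourier block P_j(F) (frequencies 2^j ≤ |n| < 2^{j+1}) is at most C·μ_m/2^{j-m} with μ_m = k/2^m. -/
open MeasureTheory intervalIntegral

section Helpers

open Set AddCircle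

private lemma cos_neg_half' {t : ℝ} (h1 : 2*Real.pi/3 ≤ t) (h2 : t ≤ 4*Real.pi/3) :
    Real.cos t ≤ -(1/2) := by
  have hpi := Real.pi_pos
  have hc : Real.cos (2*Real.pi/3) = -(1/2) := by
    have : 2*Real.pi/3 = Real.pi - Real.pi/3 := by ring
    rw [this, Real.cos_pi_sub, Real.cos_pi_div_three]
  rcases le_total t Real.pi with h | h
  · rw [← hc]
    exact Real.cos_le_cos_of_nonneg_of_le_pi (by linarith) h h1
  · have : Real.cos t = Real.cos (2*Real.pi - t) := (Real.cos_two_pi_sub t).symm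
    rw [this, ← hc]
    exact Real.cos_le_cos_of_nonneg_of_le_pi (by linarith) (by linarith) (by linarith)

private lemma one_le_norm_one_sub_exp' {t : ℝ} (h : Real.cos t ≤ -(1/2)) :
    1 ≤ ‖1 - Complex.exp (t * Complex.I)‖ := by
  have hre : (1 - Complex.exp (t * Complex.I)).re = 1 - Real.cos t := by
    simp [Complex.sub_re, Complex.exp_ofReal_mul_I_re]
  calc (1:ℝ) ≤ 1 - Real.cos t := by linarith
  _ = (1 - Complex.exp (t * Complex.I)).re := hre.symm
  _ ≤ ‖1 - Complex.exp (t * Complex.I)‖ := Complex.re_le_norm _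
  _ = ‖1 - Complex.exp (t * Complex.I)‖ := rfl

private lemma var_bound' {F : ℝ → ℂ} {a : ℝ} (ha : 0 < a) (ha2 : 2*a ≤ 2*Real.pi)
    (hFI : IntervalIntegrable F volume 0 (2*Real.pi))
    (hfin : eVariationOn F (Set.Icc 0 (2*Real.pi)) ≠ ⊤) :
    ∫ x in a..(2*Real.pi), ‖F x - F (x - a)‖ ≤
      a * (eVariationOn F (Set.Icc 0 (2*Real.pi))).toReal := by
  have hpi := Real.pi_pos
  set b : ℝ := 2*Real.pi with hb
  have hab : a ≤ b := by simp only [hb]; linarith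
  set V : ℝ → ℝ := fun x => (eVariationOn F (Set.Icc 0 x)).toReal with hV
  have hfinx : ∀ x, x ≤ b → eVariationOn F (Set.Icc 0 x) ≠ ⊤ := fun x hx =>
    fun htop => hfin (top_le_iff.mp (htop ▸ eVariationOn.mono F (Icc_subset_Icc_right hx)))
  have hVmono : MonotoneOn V (Set.Icc 0 b) := by
    intro x hx y hy hxy
    exact ENNReal.toReal_mono (hfinx y hy.2) (eVariationOn.mono F (Icc_subset_Icc_right hxy))
  have hVnonneg : ∀ x, 0 ≤ V x := fun x => ENNReal.toReal_nonneg
  have hVbound : ∀ x ∈ Set.Icc 0 b, V x ≤ V b := fun x hx => hVmono hx ⟨hx.1.trans hx.2, le_rfl⟩ hx.2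
  have hVII : ∀ u v : ℝ, Set.uIcc u v ⊆ Set.Icc 0 b → IntervalIntegrable V volume u v := by
    intro u v huv
    exact (hVmono.mono huv).intervalIntegrable
  have hpt : ∀ x ∈ Set.Icc a b, ‖F x - F (x - a)‖ ≤ V x - V (x - a) := by
    intro x hx
    have hx1 : (0:ℝ) ≤ x - a := by linarith [hx.1]
    have hx2 : x ≤ b := hx.2
    have hsum := eVariationOn.Icc_add_Icc F (s := Set.Icc 0 b) hx1 (by linarith : x - a ≤ x)
      ⟨hx1, by linarith⟩
    rw [Set.inter_eq_self_of_subset_right (Set.Icc_subset_Icc_right (by linarith)),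
        Set.inter_eq_self_of_subset_right (Set.Icc_subset_Icc hx1 hx2),
        Set.inter_eq_self_of_subset_right (Set.Icc_subset_Icc_right hx2)] at hsum
    have hf1 : eVariationOn F (Set.Icc 0 (x-a)) ≠ ⊤ := hfinx _ (by linarith)
    have hf2 : eVariationOn F (Set.Icc (x-a) x) ≠ ⊤ := by
      intro htop
      apply hfinx x hx2
      rw [← hsum, htop]
      simp
    have hVeq : V x = V (x - a) + (eVariationOn F (Set.Icc (x-a) x)).toReal := by
      rw [hV]; dsimp only
      rw [← hsum, ENNReal.toReal_add hf1 hf2]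
    have hedist : ‖F x - F (x - a)‖ ≤ (eVariationOn F (Set.Icc (x-a) x)).toReal := by
      have h := eVariationOn.edist_le F (s := Set.Icc (x-a) x)
        (x := x) (y := x - a) ⟨by linarith, le_rfl⟩ ⟨le_rfl, by linarith⟩
      have heq : ‖F x - F (x - a)‖ = (edist (F x) (F (x-a))).toReal := by
        rw [edist_dist, ENNReal.toReal_ofReal dist_nonneg, dist_eq_norm]
      rw [heq]
      exact ENNReal.toReal_mono hf2 h
    linarith [hedist, hVeq]
  have hFIab : IntervalIntegrable F volume a b := hFI.mono_set (by
    rw [Set.uIcc_of_le hab, Set.uIcc_of_le (by linarith : (0:ℝ) ≤ b)]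
    exact Set.Icc_subset_Icc (by linarith) le_rfl)
  have hFIsub : IntervalIntegrable (fun x => F (x - a)) volume a b := by
    have h0 : IntervalIntegrable F volume 0 (b - a) := hFI.mono_set (by
      rw [Set.uIcc_of_le (by linarith : (0:ℝ) ≤ b - a), Set.uIcc_of_le (by linarith : (0:ℝ) ≤ b)]
      exact Set.Icc_subset_Icc le_rfl (by linarith))
    simpa using h0.comp_sub_right a
  have hLII : IntervalIntegrable (fun x => ‖F x - F (x - a)‖) volume a b :=
    (hFIab.sub hFIsub).norm
  have hV1 : IntervalIntegrable V volume a b := hVII a b (by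
    rw [Set.uIcc_of_le hab]; exact Set.Icc_subset_Icc (by linarith) le_rfl)
  have hV2 : IntervalIntegrable (fun x => V (x - a)) volume a b := by
    have h0 : IntervalIntegrable V volume 0 (b - a) := hVII 0 (b - a) (by
      rw [Set.uIcc_of_le (by linarith : (0:ℝ) ≤ b - a)]
      exact Set.Icc_subset_Icc le_rfl (by linarith))
    simpa using h0.comp_sub_right a
  have step1 : ∫ x in a..b, ‖F x - F (x - a)‖ ≤ ∫ x in a..b, (V x - V (x - a)) :=
    intervalIntegral.integral_mono_on hab hLII (hV1.sub hV2) hpt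
  have step2 : ∫ x in a..b, (V x - V (x - a)) = (∫ x in a..b, V x) - ∫ x in (0:ℝ)..(b-a), V x := by
    rw [intervalIntegral.integral_sub hV1 hV2, intervalIntegral.integral_comp_sub_right V a,
      sub_self]
  have hs1 : IntervalIntegrable V volume a (b - a) := hVII _ _ (by
    rw [Set.uIcc_of_le (by linarith : a ≤ b - a)]
    exact Set.Icc_subset_Icc (by linarith) (by linarith))
  have hs2 : IntervalIntegrable V volume (b-a) b := hVII _ _ (by
    rw [Set.uIcc_of_le (by linarith : b - a ≤ b)]
    exact Set.Icc_subset_Icc (by linarith) le_rfl)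
  have hs0 : IntervalIntegrable V volume 0 a := hVII _ _ (by
    rw [Set.uIcc_of_le ha.le]; exact Set.Icc_subset_Icc le_rfl (by linarith))
  have split1 : (∫ x in a..b, V x) = (∫ x in a..(b-a), V x) + ∫ x in (b-a)..b, V x :=
    (intervalIntegral.integral_add_adjacent_intervals hs1 hs2).symm
  have split2 : (∫ x in (0:ℝ)..(b-a), V x) = (∫ x in (0:ℝ)..a, V x) + ∫ x in a..(b-a), V x :=
    (intervalIntegral.integral_add_adjacent_intervals hs0 hs1).symm
  have hnn : 0 ≤ ∫ x in (0:ℝ)..a, V x :=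
    intervalIntegral.integral_nonneg ha.le (fun x _ => hVnonneg x)
  have htail : (∫ x in (b-a)..b, V x) ≤ a * V b := by
    have h1 : (∫ x in (b-a)..b, V x) ≤ ∫ _x in (b-a)..b, V b :=
      intervalIntegral.integral_mono_on (by linarith) hs2 intervalIntegrable_const
        (fun x hx => hVbound x ⟨by linarith [hx.1], hx.2⟩)
    rw [intervalIntegral.integral_const, smul_eq_mul] at h1
    calc (∫ x in (b-a)..b, V x) ≤ (b - (b - a)) * V b := h1
    _ = a * V b := by ring_nf
  calc ∫ x in a..b, ‖F x - F (x - a)‖ ≤ ∫ x in a..b, (V x - V (x - a)) := step1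
  _ = (∫ x in a..(b-a), V x) + (∫ x in (b-a)..b, V x)
      - ((∫ x in (0:ℝ)..a, V x) + ∫ x in a..(b-a), V x) := by rw [step2, split1, split2]
  _ = (∫ x in (b-a)..b, V x) - ∫ x in (0:ℝ)..a, V x := by ring
  _ ≤ a * V b := by linarith [htail, hnn]

private lemma bessel' {T : ℝ} [hT : Fact (0 < T)] (g : AddCircle T → ℂ)
    (hg : AEStronglyMeasurable g haarAddCircle)
    (C : ℝ) (hb : ∀ y, ‖g y‖ ≤ C) (S : Finset ℤ) :
    ∑ n ∈ S, ‖fourierCoeff g n‖^2 ≤ ∫ t, ‖g t‖^2 ∂(haarAddCircle) := by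
  have hmem : MemLp g 2 haarAddCircle := MemLp.of_bound hg C (Filter.Eventually.of_forall hb)
  set gL := hmem.toLp g with hgL
  have hcoeff : ∀ n : ℤ, fourierCoeff (gL : AddCircle T → ℂ) n = fourierCoeff g n := by
    intro n
    apply MeasureTheory.integral_congr_ae
    filter_upwards [hmem.coeFn_toLp] with t ht
    rw [ht]
  have hsum : Summable (fun n : ℤ => ‖fourierCoeff (gL : AddCircle T → ℂ) n‖^2) := by
    have h := lp.memℓp (fourierBasis.repr gL)
    rw [memℓp_gen_iff (by norm_num : (0:ℝ) < (2:ENNReal).toReal)] at h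
    have h2 : ∀ i : ℤ, ‖fourierBasis.repr gL i‖ ^ (2:ENNReal).toReal
        = ‖fourierCoeff (gL : AddCircle T → ℂ) i‖^2 := by
      intro i
      rw [fourierBasis_repr]
      norm_num
    simpa only [h2] using h
  calc ∑ n ∈ S, ‖fourierCoeff g n‖^2
      = ∑ n ∈ S, ‖fourierCoeff (gL : AddCircle T → ℂ) n‖^2 := by
        simp_rw [hcoeff]
    _ ≤ ∑' n : ℤ, ‖fourierCoeff (gL : AddCircle T → ℂ) n‖^2 :=
        hsum.sum_le_tsum S (fun n _ => sq_nonneg _)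
    _ = ∫ t, ‖(gL : AddCircle T → ℂ) t‖^2 ∂haarAddCircle := tsum_sq_fourierCoeff gL
    _ = ∫ t, ‖g t‖^2 ∂haarAddCircle := by
        apply MeasureTheory.integral_congr_ae
        filter_upwards [hmem.coeFn_toLp] with t ht
        rw [ht]

private lemma coeff_sub_translate' {T : ℝ} [hT : Fact (0 < T)] (f : AddCircle T → ℂ)
    (hf : AEStronglyMeasurable f haarAddCircle) (C : ℝ) (hb : ∀ y, ‖f y‖ ≤ C)
    (c : AddCircle T) (n : ℤ) :
    fourierCoeff (fun y => f y - f (y - c)) n = (1 - fourier (-n) c) * fourierCoeff f n := by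
  have hfour : ∀ (m : ℤ) (x : AddCircle T), ‖fourier m x‖ = 1 := fun m x => Circle.norm_coe _
  have htrans : MeasurePreserving (fun y : AddCircle T => y - c) haarAddCircle haarAddCircle :=
    measurePreserving_sub_right haarAddCircle c
  have hf2 : AEStronglyMeasurable (fun y : AddCircle T => f (y - c)) haarAddCircle :=
    hf.comp_quasiMeasurePreserving htrans.quasiMeasurePreserving
  have hint : ∀ (h : AddCircle T → ℂ), AEStronglyMeasurable h haarAddCircle →
      (∀ y, ‖h y‖ ≤ C) → Integrable (fun t => fourier (-n) t • h t) haarAddCircle := by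
    intro h hm hbd
    refine ⟨(fourier (-n)).continuous.aestronglyMeasurable.smul hm, ?_⟩
    apply HasFiniteIntegral.of_bounded (C := C)
    refine Filter.Eventually.of_forall fun t => ?_
    rw [norm_smul, hfour, one_mul]
    exact hbd t
  have key : (∫ t, fourier (-n) t • f (t - c) ∂haarAddCircle)
      = fourier (-n) c • ∫ t, fourier (-n) t • f t ∂haarAddCircle := by
    have h1 := MeasureTheory.integral_add_right_eq_self
      (μ := (haarAddCircle : Measure (AddCircle T)))
      (fun t => fourier (-n) t • f (t - c)) c
    rw [← h1]
    have h2 : ∀ t : AddCircle T, fourier (-n) (t + c) • f (t + c - c)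
        = fourier (-n) c • (fourier (-n) t • f t) := by
      intro t
      have hmul : fourier (-n) (t + c) = fourier (-n) t * fourier (-n) c := by
        simp only [fourier_apply, smul_add, AddCircle.toCircle_add]
        push_cast
        ring
      rw [add_sub_cancel_right, hmul]
      simp only [smul_eq_mul]
      ring
    simp_rw [h2]
    rw [MeasureTheory.integral_smul]
  rw [fourierCoeff, fourierCoeff]
  have hsplit : (∫ t, fourier (-n) t • (f t - f (t - c)) ∂haarAddCircle)
      = (∫ t, fourier (-n) t • f t ∂haarAddCircle)
        - ∫ t, fourier (-n) t • f (t - c) ∂haarAddCircle := by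
    rw [← MeasureTheory.integral_sub (hint f hf hb) (hint _ hf2 (fun y => hb _))]
    congr 1
    ext t
    rw [smul_sub]
  rw [hsplit, key]
  simp only [smul_eq_mul]
  ring

end Helpers

/-- The `n`-th Fourier coefficient of a function on the circle `[0, 2π]`. -/
noncomputable def fc (F : ℝ → ℂ) (n : ℤ) : ℂ :=
  (2 * (Real.pi : ℂ))⁻¹ * ∫ x in (0 : ℝ)..(2 * Real.pi), F x * Complex.exp (-Complex.I * n * x)

private lemma fc_eq_fourierCoeff [hT : Fact (0 < 2*Real.pi)] (F : ℝ → ℂ) (n : ℤ) :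
    fc F n = fourierCoeff (AddCircle.liftIoc (2*Real.pi) 0 F) n := by
  have hpi := Real.pi_pos
  rw [fourierCoeff_eq_intervalIntegral _ n 0, zero_add]
  have hcongr : ∫ x in (0:ℝ)..(2*Real.pi),
        fourier (-n) (x : AddCircle (2*Real.pi)) • AddCircle.liftIoc (2*Real.pi) 0 F x
      = ∫ x in (0:ℝ)..(2*Real.pi), F x * Complex.exp (-Complex.I * n * x) := by
    apply intervalIntegral.integral_congr_ae
    apply Filter.Eventually.of_forall
    intro x hx
    rw [Set.uIoc_of_le (by linarith : (0:ℝ) ≤ 2*Real.pi)] at hx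
    have hmem : x ∈ Set.Ioc (0:ℝ) (0 + 2*Real.pi) := by rwa [zero_add]
    rw [AddCircle.liftIoc_coe_apply hmem, fourier_coe_apply, smul_eq_mul, mul_comm]
    congr 1
    have h2pi : ((Real.pi : ℂ)) ≠ 0 := by
      exact_mod_cast Real.pi_ne_zero
    push_cast
    congr 1
    field_simp
  rw [hcongr, fc]
  rw [Complex.real_smul]
  congr 1
  push_cast
  rw [one_div]

/-- The squared `ℓ²`-norm of the dyadic Fourier block `2^j ≤ |n| < 2^{j+1}`. -/
noncomputable def blockSq (F : ℝ → ℂ) (j : ℕ) : ℝ :=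
  ∑ n ∈ (Finset.Icc (-(2 ^ (j + 1) : ℤ)) (2 ^ (j + 1))).filter
      (fun n => 2 ^ j ≤ n.natAbs ∧ n.natAbs < 2 ^ (j + 1)),
    ‖fc F n‖ ^ 2

set_option maxHeartbeats 2000000 in
/-- High-frequency block estimate: for `F` bounded by `1`, supported on `k` disjoint
segments of length at most `2π/2^m`, with mean zero on each segment and total
variation `O(k)`, the squared `L²` norm of the dyadic block `j > m` is at most
`C·μ_m/2^{j-m} = C·k/2^j`. -/
theorem stmt_5 : ∀ Cv > (0 : ℝ), ∃ C > (0 : ℝ), ∀ (F : ℝ → ℂ) (k m j : ℕ) (u v : ℕ → ℝ),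
    IntervalIntegrable F volume 0 (2 * Real.pi) →
    (∀ i < k, u i < v i ∧ v i - u i ≤ 2 * Real.pi / 2 ^ m ∧
      Set.Icc (u i) (v i) ⊆ Set.Icc 0 (2 * Real.pi)) →
    (∀ i < k, ∀ i' < k, i ≠ i' → Disjoint (Set.Icc (u i) (v i)) (Set.Icc (u i') (v i'))) →
    (∀ i < k, (∫ x in (u i)..(v i), F x) = 0) →
    (∀ x, ‖F x‖ ≤ 1) →
    (∀ x ∈ Set.Icc (0 : ℝ) (2 * Real.pi), (∀ i < k, x ∉ Set.Icc (u i) (v i)) → F x = 0) →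
    eVariationOn F (Set.Icc 0 (2 * Real.pi)) ≤ ENNReal.ofReal (Cv * k) →
    m < j →
    blockSq F j ≤ C * ((k : ℝ) / 2 ^ m) / 2 ^ (j - m) := by
  intro Cv hCv
  refine ⟨4 + 2*Cv, by linarith, ?_⟩
  intro F k m j u v hFI hseg hdisj hmean hFb hsupp hvar hmj
  haveI hfact : Fact (0 < 2*Real.pi) := ⟨by positivity⟩
  have hpi := Real.pi_pos
  by_cases hk : k = 0
  · -- degenerate case : F vanishes on [0, 2π]
    subst hk
    have hzero : blockSq F j = 0 := by
      rw [blockSq]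
      apply Finset.sum_eq_zero
      intro n _
      have hfc : fc F n = 0 := by
        have hEq : Set.EqOn (fun x => F x * Complex.exp (-Complex.I * n * x)) 0
            (Set.uIcc (0:ℝ) (2*Real.pi)) := by
          intro x hx
          rw [Set.uIcc_of_le (by linarith : (0:ℝ) ≤ 2*Real.pi)] at hx
          simp [hsupp x hx (fun i hi => absurd hi (Nat.not_lt_zero i))]
        rw [fc, intervalIntegral.integral_congr hEq]
        simp
      rw [hfc, norm_zero]
      norm_num
    rw [hzero]
    positivity
  · have hk1 : (1:ℝ) ≤ (k:ℝ) := by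
      have := Nat.one_le_iff_ne_zero.mpr hk
      exact_mod_cast this
    -- measurable modification of F
    have hIoc : IntegrableOn F (Set.Ioc 0 (2*Real.pi)) volume := hFI.1
    have hae0 : AEStronglyMeasurable F (volume.restrict (Set.Ioc 0 (2*Real.pi))) :=
      hIoc.aestronglyMeasurable
    set F' : ℝ → ℂ := hae0.mk F with hF'
    have hsm' : StronglyMeasurable F' := hae0.stronglyMeasurable_mk
    set F'' : ℝ → ℂ := fun x => if ‖F' x‖ ≤ 1 then F' x else 0 with hF''
    have hsm'' : StronglyMeasurable F'' := by
      apply StronglyMeasurable.ite _ hsm' stronglyMeasurable_const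
      exact measurableSet_le hsm'.norm.measurable measurable_const
    have hb'' : ∀ x, ‖F'' x‖ ≤ 1 := by
      intro x
      rw [hF'']
      dsimp only
      split_ifs with h
      · exact h
      · simp
    have hae'' : F =ᵐ[volume.restrict (Set.Ioc 0 (2*Real.pi))] F'' := by
      filter_upwards [hae0.ae_eq_mk] with x hx
      have hx' : F x = F' x := hx
      have h1 : ‖F' x‖ ≤ 1 := by rw [← hx']; exact hFb x
      calc F x = F' x := hx'
      _ = F'' x := by rw [hF'']; dsimp only; rw [if_pos h1]
    -- the shift
    set P : ℝ := 2^j with hP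
    have hPpos : (0:ℝ) < P := by positivity
    have hP1 : (1:ℝ) ≤ P := by
      rw [hP]; exact one_le_pow₀ (by norm_num)
    set a : ℝ := 2*Real.pi / (3*P) with ha_def
    have ha : 0 < a := by positivity
    have haP : a * (3*P) = 2*Real.pi := by
      rw [ha_def]; field_simp
    have ha2 : 2*a ≤ 2*Real.pi := by nlinarith
    have haπ : a ≤ 2*Real.pi := by linarith
    -- circle functions
    set f : AddCircle (2*Real.pi) → ℂ := AddCircle.liftIoc (2*Real.pi) 0 F'' with hf
    have hf_sm : StronglyMeasurable f := by
      apply hsm''.comp_measurable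
      exact measurable_subtype_coe.comp (AddCircle.measurableEquivIoc (2*Real.pi) 0).measurable
    have hf_b : ∀ y, ‖f y‖ ≤ 1 := fun y => hb'' _
    set c : AddCircle (2*Real.pi) := ((a : ℝ) : AddCircle (2*Real.pi)) with hc
    set g : AddCircle (2*Real.pi) → ℂ := fun y => f y - f (y - c) with hg
    have hg_sm : StronglyMeasurable g := by
      apply hf_sm.sub
      exact hf_sm.comp_measurable (continuous_id.sub continuous_const).measurable
    have hg_b : ∀ y, ‖g y‖ ≤ 2 := by
      intro y
      calc ‖f y - f (y - c)‖ ≤ ‖f y‖ + ‖f (y - c)‖ := norm_sub_le _ _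
      _ ≤ 2 := by linarith [hf_b y, hf_b (y - c)]
    -- fc F n = fourierCoeff f n
    have hfc_eq : ∀ n : ℤ, fc F n = fourierCoeff f n := by
      intro n
      have h1 : fc F n = fc F'' n := by
        rw [fc, fc]
        congr 1
        apply intervalIntegral.integral_congr_ae
        have h2 := (ae_restrict_iff' measurableSet_Ioc).mp hae''
        filter_upwards [h2] with x hx hxI
        rw [Set.uIoc_of_le (by linarith : (0:ℝ) ≤ 2*Real.pi)] at hxI
        rw [hx hxI]
      rw [h1, hf]
      exact fc_eq_fourierCoeff F'' n
    -- per-coefficient multiplier bound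
    set S := (Finset.Icc (-(2 ^ (j + 1) : ℤ)) (2 ^ (j + 1))).filter
      (fun n => 2 ^ j ≤ n.natAbs ∧ n.natAbs < 2 ^ (j + 1)) with hS
    have hcoeff_bound : ∀ n ∈ S, ‖fc F n‖^2 ≤ ‖fourierCoeff g n‖^2 := by
      intro n hn
      rw [hS, Finset.mem_filter] at hn
      obtain ⟨-, hn1, hn2⟩ := hn
      have hmult := coeff_sub_translate' f hf_sm.aestronglyMeasurable 1 hf_b c n
      have habs : (n.natAbs : ℝ) * a = |(n:ℝ) * a| := by
        rw [abs_mul, abs_of_pos ha]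
        rw [Nat.cast_natAbs, Int.cast_abs]
      have hlow : 2*Real.pi/3 ≤ (n.natAbs : ℝ) * a := by
        have h1 : P ≤ (n.natAbs : ℝ) := by
          rw [hP]
          exact_mod_cast hn1
        nlinarith
      have hhigh : (n.natAbs : ℝ) * a ≤ 4*Real.pi/3 := by
        have h1 : (n.natAbs : ℝ) ≤ 2*P := by
          rw [hP]
          have : (n.natAbs : ℝ) ≤ 2^(j+1) := by exact_mod_cast hn2.le
          rw [pow_succ] at this
          linarith
        nlinarith
      have hcos : Real.cos ((n:ℝ) * a) ≤ -(1/2) := by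
        have h1 : Real.cos ((n:ℝ) * a) = Real.cos ((n.natAbs : ℝ) * a) := by
          rw [habs, Real.cos_abs]
        rw [h1]
        exact cos_neg_half' hlow hhigh
      have hexp : fourier (-n) c = Complex.exp ((-((n:ℝ) * a) : ℝ) * Complex.I) := by
        rw [hc, fourier_coe_apply]
        congr 1
        have h2pi : ((Real.pi : ℂ)) ≠ 0 := by exact_mod_cast Real.pi_ne_zero
        push_cast
        field_simp
      have hge1 : 1 ≤ ‖1 - fourier (-n) c‖ := by
        rw [hexp]
        apply one_le_norm_one_sub_exp'
        rw [Real.cos_neg]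
        exact hcos
      have : ‖fc F n‖ ≤ ‖fourierCoeff g n‖ := by
        rw [hfc_eq n, hmult, norm_mul]
        exact le_mul_of_one_le_left (norm_nonneg _) hge1
      exact pow_le_pow_left₀ (norm_nonneg _) this 2
    -- Bessel
    have hbessel : ∑ n ∈ S, ‖fourierCoeff g n‖^2 ≤ ∫ t, ‖g t‖^2 ∂AddCircle.haarAddCircle :=
      bessel' g hg_sm.aestronglyMeasurable 2 hg_b S
    -- transfer the integral to ℝ
    have hhaar : ∫ t, ‖g t‖^2 ∂AddCircle.haarAddCircle
        = (2*Real.pi)⁻¹ * ∫ x in (0:ℝ)..(2*Real.pi), ‖g ((x : ℝ) : AddCircle (2*Real.pi))‖^2 := by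
      have h1 : ∫ t, ‖g t‖^2 ∂(volume : Measure (AddCircle (2*Real.pi)))
          = (2*Real.pi) * ∫ t, ‖g t‖^2 ∂AddCircle.haarAddCircle := by
        rw [AddCircle.volume_eq_smul_haarAddCircle, MeasureTheory.integral_smul_measure,
          ENNReal.toReal_ofReal (by positivity), smul_eq_mul]
      have h2 : (∫ x in Set.Ioc (0:ℝ) (0 + 2*Real.pi), ‖g ((x : ℝ) : AddCircle (2*Real.pi))‖^2)
          = ∫ t, ‖g t‖^2 ∂(volume : Measure (AddCircle (2*Real.pi))) :=
        AddCircle.integral_preimage (2*Real.pi) 0 (fun t => ‖g t‖^2)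
      have h3 : ∫ x in (0:ℝ)..(2*Real.pi), ‖g ((x : ℝ) : AddCircle (2*Real.pi))‖^2
          = ∫ x in Set.Ioc (0:ℝ) (0 + 2*Real.pi), ‖g ((x : ℝ) : AddCircle (2*Real.pi))‖^2 := by
        rw [intervalIntegral.integral_of_le (by linarith : (0:ℝ) ≤ 2*Real.pi), zero_add]
      rw [h3, h2, h1]
      field_simp
    -- interval integrability of x ↦ ‖g ↑x‖²
    have hgm : StronglyMeasurable (fun x : ℝ => g ((x:ℝ) : AddCircle (2*Real.pi))) :=
      hg_sm.comp_measurable AddCircle.measurable_mk'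
    have hφ_II : ∀ uu vv : ℝ, IntervalIntegrable
        (fun x : ℝ => ‖g ((x:ℝ) : AddCircle (2*Real.pi))‖^2) volume uu vv := by
      intro uu vv
      have hsm2 : StronglyMeasurable (fun x : ℝ => ‖g ((x:ℝ) : AddCircle (2*Real.pi))‖^2) := by
        simp only [pow_two]
        exact hgm.norm.mul hgm.norm
      apply IntervalIntegrable.mono_fun (_root_.intervalIntegrable_const (c := (4:ℝ)))
        hsm2.aestronglyMeasurable.restrict
      apply Filter.Eventually.of_forall
      intro x
      have h1 : ‖g (((x:ℝ)) : AddCircle (2*Real.pi))‖ ≤ 2 := hg_b _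
      have h2 : (0:ℝ) ≤ ‖g (((x:ℝ)) : AddCircle (2*Real.pi))‖ := norm_nonneg _
      simp only [Real.norm_eq_abs]
      rw [abs_of_nonneg (by positivity : (0:ℝ) ≤ ‖g (((x:ℝ)) : AddCircle (2*Real.pi))‖^2),
        abs_of_nonneg (by norm_num : (0:ℝ) ≤ (4:ℝ))]
      nlinarith
    have hsplit : (∫ x in (0:ℝ)..(2*Real.pi), ‖g ((x:ℝ) : AddCircle (2*Real.pi))‖^2)
        = (∫ x in (0:ℝ)..a, ‖g ((x:ℝ) : AddCircle (2*Real.pi))‖^2)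
          + ∫ x in a..(2*Real.pi), ‖g ((x:ℝ) : AddCircle (2*Real.pi))‖^2 :=
      (intervalIntegral.integral_add_adjacent_intervals (hφ_II 0 a) (hφ_II a _)).symm
    have hbound1 : (∫ x in (0:ℝ)..a, ‖g ((x:ℝ) : AddCircle (2*Real.pi))‖^2) ≤ 4*a := by
      have h1 : (∫ x in (0:ℝ)..a, ‖g ((x:ℝ) : AddCircle (2*Real.pi))‖^2)
          ≤ ∫ _x in (0:ℝ)..a, (4:ℝ) := by
        apply intervalIntegral.integral_mono_on ha.le (hφ_II 0 a) _root_.intervalIntegrable_const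
        intro x _
        have h2 : ‖g ((x:ℝ) : AddCircle (2*Real.pi))‖ ≤ 2 := hg_b _
        have h3 : (0:ℝ) ≤ ‖g ((x:ℝ) : AddCircle (2*Real.pi))‖ := norm_nonneg _
        nlinarith
      have h4 : (∫ _x in (0:ℝ)..a, (4:ℝ)) = 4*a := by
        rw [intervalIntegral.integral_const, smul_eq_mul]
        ring
      linarith
    -- interval integrability of F'' and its translate
    have hFII'' : IntervalIntegrable F'' volume 0 (2*Real.pi) := by
      constructor
      · exact hIoc.congr hae''
      · have hemp : Set.Ioc (2*Real.pi) (0:ℝ) = ∅ := Set.Ioc_eq_empty (by linarith)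
        rw [hemp]
        exact integrableOn_empty
    have hF2ab : IntervalIntegrable F'' volume a (2*Real.pi) := hFII''.mono_set (by
      rw [Set.uIcc_of_le haπ, Set.uIcc_of_le (by linarith : (0:ℝ) ≤ 2*Real.pi)]
      exact Set.Icc_subset_Icc ha.le le_rfl)
    have hF2sub : IntervalIntegrable (fun x => F'' (x - a)) volume a (2*Real.pi) := by
      have h0 : IntervalIntegrable F'' volume 0 (2*Real.pi - a) := hFII''.mono_set (by
        rw [Set.uIcc_of_le (by linarith : (0:ℝ) ≤ 2*Real.pi - a),
          Set.uIcc_of_le (by linarith : (0:ℝ) ≤ 2*Real.pi)]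
        exact Set.Icc_subset_Icc le_rfl (by linarith))
      have h2 := h0.comp_sub_right a
      rw [zero_add, sub_add_cancel] at h2
      exact h2
    have hψII : IntervalIntegrable (fun x => ‖F'' x - F'' (x - a)‖) volume a (2*Real.pi) :=
      (hF2ab.sub hF2sub).norm
    have hdiffb : ∀ x : ℝ, ‖F'' x - F'' (x - a)‖ ≤ 2 := by
      intro x
      calc ‖F'' x - F'' (x - a)‖ ≤ ‖F'' x‖ + ‖F'' (x - a)‖ := norm_sub_le _ _
      _ ≤ 2 := by linarith [hb'' x, hb'' (x - a)]
    have hsqII : IntervalIntegrable (fun x => ‖F'' x - F'' (x - a)‖^2) volume a (2*Real.pi) := by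
      have hsmn : StronglyMeasurable (fun x => ‖F'' x - F'' (x - a)‖) :=
        (hsm''.sub (hsm''.comp_measurable (measurable_id.sub_const a))).norm
      have hsm2 : StronglyMeasurable (fun x => ‖F'' x - F'' (x - a)‖^2) := by
        simp only [pow_two]
        exact hsmn.mul hsmn
      apply IntervalIntegrable.mono_fun (_root_.intervalIntegrable_const (c := (4:ℝ)))
        hsm2.aestronglyMeasurable.restrict
      apply Filter.Eventually.of_forall
      intro x
      simp only [Real.norm_eq_abs]
      rw [abs_of_nonneg (by positivity : (0:ℝ) ≤ ‖F'' x - F'' (x - a)‖^2),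
        abs_of_nonneg (by norm_num : (0:ℝ) ≤ (4:ℝ))]
      nlinarith [hdiffb x, norm_nonneg (F'' x - F'' (x - a))]
    -- identification on (a, 2π]
    have hcongr2 : (∫ x in a..(2*Real.pi), ‖g ((x:ℝ) : AddCircle (2*Real.pi))‖^2)
        = ∫ x in a..(2*Real.pi), ‖F'' x - F'' (x - a)‖^2 := by
      apply intervalIntegral.integral_congr_ae
      apply Filter.Eventually.of_forall
      intro x hx
      rw [Set.uIoc_of_le (by linarith : a ≤ 2*Real.pi)] at hx
      have hx1 : x ∈ Set.Ioc (0:ℝ) (0 + 2*Real.pi) := ⟨by linarith [hx.1], by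
        rw [zero_add]; exact hx.2⟩
      have hx2 : x - a ∈ Set.Ioc (0:ℝ) (0 + 2*Real.pi) := ⟨by linarith [hx.1], by
        rw [zero_add]; linarith [hx.2]⟩
      have hgx : g ((x:ℝ) : AddCircle (2*Real.pi)) = F'' x - F'' (x - a) := by
        rw [hg]
        dsimp only
        have hsub : ((x:ℝ) : AddCircle (2*Real.pi)) - c = ((x - a : ℝ) : AddCircle (2*Real.pi)) := by
          rw [hc]
          norm_cast
        rw [hsub, hf, AddCircle.liftIoc_coe_apply hx1, AddCircle.liftIoc_coe_apply hx2]
      rw [hgx]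
    have hbound3 : (∫ x in a..(2*Real.pi), ‖F'' x - F'' (x - a)‖^2)
        ≤ 2 * ∫ x in a..(2*Real.pi), ‖F'' x - F'' (x - a)‖ := by
      have h1 : (∫ x in a..(2*Real.pi), ‖F'' x - F'' (x - a)‖^2)
          ≤ ∫ x in a..(2*Real.pi), 2 * ‖F'' x - F'' (x - a)‖ := by
        apply intervalIntegral.integral_mono_on (by linarith : a ≤ 2*Real.pi) hsqII
          (hψII.const_mul 2)
        intro x _
        nlinarith [hdiffb x, norm_nonneg (F'' x - F'' (x - a))]
      rwa [intervalIntegral.integral_const_mul] at h1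
    have hcongr4 : (∫ x in a..(2*Real.pi), ‖F'' x - F'' (x - a)‖)
        = ∫ x in a..(2*Real.pi), ‖F x - F (x - a)‖ := by
      apply intervalIntegral.integral_congr_ae
      have h1 : ∀ᵐ x ∂(volume : Measure ℝ), x ∈ Set.Ioc (0:ℝ) (2*Real.pi) → F x = F'' x :=
        (ae_restrict_iff' measurableSet_Ioc).mp hae''
      have h2 : ∀ᵐ x ∂(volume : Measure ℝ),
          x - a ∈ Set.Ioc (0:ℝ) (2*Real.pi) → F (x - a) = F'' (x - a) :=
        (measurePreserving_sub_right volume a).quasiMeasurePreserving.ae h1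
      filter_upwards [h1, h2] with x hx1 hx2 hxI
      rw [Set.uIoc_of_le (by linarith : a ≤ 2*Real.pi)] at hxI
      rw [hx1 ⟨by linarith [hxI.1], hxI.2⟩, hx2 ⟨by linarith [hxI.1], by linarith [hxI.2]⟩]
    have hfin : eVariationOn F (Set.Icc 0 (2*Real.pi)) ≠ ⊤ :=
      ne_top_of_le_ne_top ENNReal.ofReal_ne_top hvar
    have hvarR : (eVariationOn F (Set.Icc 0 (2*Real.pi))).toReal ≤ Cv * k := by
      have h0 := ENNReal.toReal_mono ENNReal.ofReal_ne_top hvar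
      rwa [ENNReal.toReal_ofReal (by positivity)] at h0
    have hbound5 : (∫ x in a..(2*Real.pi), ‖F x - F (x - a)‖) ≤ a * (Cv * k) := by
      have h0 := var_bound' ha ha2 hFI hfin
      have h1 : a * (eVariationOn F (Set.Icc 0 (2*Real.pi))).toReal ≤ a * (Cv * k) := by
        apply mul_le_mul_of_nonneg_left hvarR ha.le
      linarith
    -- final assembly
    have hfinal : blockSq F j ≤ (2*Real.pi)⁻¹ * (4*a + 2*(a*(Cv*k))) := by
      calc blockSq F j = ∑ n ∈ S, ‖fc F n‖^2 := rfl
      _ ≤ ∑ n ∈ S, ‖fourierCoeff g n‖^2 := Finset.sum_le_sum hcoeff_bound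
      _ ≤ ∫ t, ‖g t‖^2 ∂AddCircle.haarAddCircle := hbessel
      _ = (2*Real.pi)⁻¹ * ∫ x in (0:ℝ)..(2*Real.pi), ‖g ((x:ℝ) : AddCircle (2*Real.pi))‖^2 := hhaar
      _ ≤ (2*Real.pi)⁻¹ * (4*a + 2*(a*(Cv*k))) := by
          apply mul_le_mul_of_nonneg_left _ (by positivity)
          rw [hsplit, hcongr2]
          have h6 : (∫ x in a..(2*Real.pi), ‖F'' x - F'' (x - a)‖^2) ≤ 2*(a*(Cv*k)) := by
            calc (∫ x in a..(2*Real.pi), ‖F'' x - F'' (x - a)‖^2)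
                ≤ 2 * ∫ x in a..(2*Real.pi), ‖F'' x - F'' (x - a)‖ := hbound3
            _ = 2 * ∫ x in a..(2*Real.pi), ‖F x - F (x - a)‖ := by rw [hcongr4]
            _ ≤ 2*(a*(Cv*k)) := by linarith [hbound5]
          linarith [hbound1]
    have hrhs : (4 + 2*Cv) * ((k:ℝ) / 2 ^ m) / 2 ^ (j - m) = (4 + 2*Cv) * (k:ℝ) / P := by
      have hjm : m + (j - m) = j := Nat.add_sub_cancel' hmj.le
      have hPe : P = 2^m * 2^(j-m) := by rw [hP, ← pow_add, hjm]
      rw [hPe]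
      have h2m : ((2:ℝ)^m) ≠ 0 := by positivity
      have h2jm : ((2:ℝ)^(j-m)) ≠ 0 := by positivity
      field_simp
    have harith : (2*Real.pi)⁻¹ * (4*a + 2*(a*(Cv*k))) ≤ (4 + 2*Cv) * (k:ℝ) / P := by
      have h2 : (2*Real.pi)⁻¹ * (4*a + 2*(a*(Cv*k))) = (4 + 2*(Cv*k))/(3*P) := by
        rw [ha_def]
        field_simp
      rw [h2, div_le_div_iff₀ (by positivity : (0:ℝ) < 3*P) hPpos]
      have hkpos : (0:ℝ) ≤ (k:ℝ) := by positivity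
      nlinarith [mul_nonneg (mul_nonneg hCv.le hkpos) hPpos.le,
        mul_nonneg (by linarith : (0:ℝ) ≤ (k:ℝ) - 1) hPpos.le, hPpos.le, hCv.le]
    rw [hrhs]
    linarith [hfinal, harith]
end

section
/- For any interval I and integrable A, the A_0-measure satisfies ∫_I min(|A|,1) ≤ A_0(I) ≤ ∫_I |A|, and also min(|∫_I A|, |I|) ≤ A_0(I) ≤ |I|. -/
open MeasureTheory intervalIntegral

lemma ioc_disj {u v u' v' : ℝ} (huv : u ≤ v) (huv' : u' ≤ v')
    (h : Disjoint (Set.Ioo u v) (Set.Ioo u' v')) :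
    Disjoint (Set.Ioc u v) (Set.Ioc u' v') := by
  rcases eq_or_lt_of_le huv with rfl | huv
  · simp
  rcases eq_or_lt_of_le huv' with rfl | huv'
  · simp
  have hvc : v ≤ u' ∨ v' ≤ u := by
    by_contra hc
    push_neg at hc
    set m := (max u u' + min v v') / 2 with hm
    have h1 : max u u' < min v v' := by
      simp only [max_lt_iff, lt_min_iff]
      exact ⟨⟨huv, hc.1⟩, ⟨hc.2, huv'⟩⟩
    have h2 : max u u' < m ∧ m < min v v' := by constructor <;> (rw [hm]; linarith)
    have hmem : m ∈ Set.Ioo u v ∩ Set.Ioo u' v' := by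
      refine ⟨⟨lt_of_le_of_lt (le_max_left u u') h2.1, lt_of_lt_of_le h2.2 (min_le_left v v')⟩,
        ⟨lt_of_le_of_lt (le_max_right u u') h2.1, lt_of_lt_of_le h2.2 (min_le_right v v')⟩⟩
    exact (h.ne_of_mem hmem.1 hmem.2) rfl
  rw [Set.disjoint_left]
  rintro x ⟨hx1, hx2⟩ ⟨hx3, hx4⟩
  rcases hvc with h1 | h1
  · linarith
  · linarith

lemma sum_key {f : ℝ → ℝ} {a b : ℝ} (hf : IntegrableOn f (Set.Icc a b) volume)
    (hf0 : ∀ x, 0 ≤ f x) {k : ℕ} {u v : ℕ → ℝ}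
    (hs : ∀ i < k, a ≤ u i ∧ u i ≤ v i ∧ v i ≤ b)
    (hd : ∀ i < k, ∀ i' < k, i ≠ i' → Disjoint (Set.Ioo (u i) (v i)) (Set.Ioo (u i') (v i'))) :
    ∑ i ∈ Finset.range k, ∫ x in Set.Ioc (u i) (v i), f x ≤ ∫ x in Set.Ioc a b, f x := by
  have hsub : ∀ i < k, Set.Ioc (u i) (v i) ⊆ Set.Ioc a b := fun i hi =>
    Set.Ioc_subset_Ioc (hs i hi).1 (hs i hi).2.2
  have hIocIcc : Set.Ioc a b ⊆ Set.Icc a b := Set.Ioc_subset_Icc_self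
  have hint : ∀ i ∈ Finset.range k, IntegrableOn f (Set.Ioc (u i) (v i)) volume := by
    intro i hi
    exact (hf.mono_set (((hsub i (Finset.mem_range.mp hi)).trans hIocIcc)))
  rw [← MeasureTheory.integral_biUnion_finset (Finset.range k)
    (fun i _ => measurableSet_Ioc)
    (fun i hi i' hi' hne => by
      simp only [Finset.coe_range, Set.mem_Iio] at hi hi'
      exact ioc_disj (hs i hi).2.1 (hs i' hi').2.1 (hd i hi i' hi' hne))
    hint]
  apply MeasureTheory.setIntegral_mono_set (hf.mono_set hIocIcc)
    (Filter.Eventually.of_forall fun x => hf0 x)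
  apply Filter.Eventually.of_forall
  intro x hx
  replace hx : x ∈ ⋃ i ∈ Finset.range k, Set.Ioc (u i) (v i) := hx
  rw [Set.mem_iUnion₂] at hx
  obtain ⟨i, hi, hxi⟩ := hx
  exact hsub i (Finset.mem_range.mp hi) hxi

lemma cont_deficit {g : ℝ → ℝ} (hg : Continuous g) {p q ε' : ℝ} (hpq : p ≤ q)
    (hosc : ∀ x ∈ Set.Icc p q, ∀ y ∈ Set.Icc p q, |g x - g y| ≤ ε') :
    (∫ x in p..q, |g x|) - |∫ x in p..q, g x| ≤ ε' * (q - p) := by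
  have hpmem : p ∈ Set.Icc p q := Set.left_mem_Icc.mpr hpq
  have hε' : 0 ≤ ε' := by simpa using hosc p hpmem p hpmem
  by_cases hz : ∃ x ∈ Set.Icc p q, g x = 0
  · obtain ⟨x₀, hx₀, hgx₀⟩ := hz
    have hb : ∀ y ∈ Set.Icc p q, |g y| ≤ ε' := by
      intro y hy
      have := hosc y hy x₀ hx₀
      rwa [hgx₀, sub_zero] at this
    have h1 : (∫ x in p..q, |g x|) ≤ ∫ x in p..q, ε' := by
      apply intervalIntegral.integral_mono_on hpq (hg.abs.intervalIntegrable p q)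
        (intervalIntegrable_const) hb
    have h2 : (0:ℝ) ≤ |∫ x in p..q, g x| := abs_nonneg _
    rw [intervalIntegral.integral_const] at h1
    simp only [smul_eq_mul] at h1
    nlinarith
  · push_neg at hz
    rcases lt_trichotomy (g p) 0 with hgp | hgp | hgp
    · have hneg : ∀ x ∈ Set.Icc p q, g x ≤ 0 := by
        intro x hx
        by_contra hc
        push_neg at hc
        have : (0:ℝ) ∈ Set.uIcc (g p) (g x) := by
          rw [Set.mem_uIcc]; left; exact ⟨hgp.le, hc.le⟩
        obtain ⟨y, hy, hgy⟩ := intermediate_value_uIcc (hg.continuousOn) this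
        exact hz y (Set.uIcc_subset_Icc hpmem hx hy) hgy
      have habs : ∀ x ∈ Set.uIcc p q, |g x| = -g x := by
        intro x hx
        rw [Set.uIcc_of_le hpq] at hx
        exact abs_of_nonpos (hneg x hx)
      rw [intervalIntegral.integral_congr habs, intervalIntegral.integral_neg]
      have hle : (∫ x in p..q, g x) ≤ 0 := by
        have h : 0 ≤ ∫ x in p..q, -g x :=
          intervalIntegral.integral_nonneg hpq (fun x hx => neg_nonneg.mpr (hneg x hx))
        rw [intervalIntegral.integral_neg] at h
        linarith
      rw [abs_of_nonpos hle]
      nlinarith [sub_nonneg.mpr hpq]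
    · exact absurd hgp (hz p hpmem)
    · have hpos : ∀ x ∈ Set.Icc p q, 0 ≤ g x := by
        intro x hx
        by_contra hc
        push_neg at hc
        have : (0:ℝ) ∈ Set.uIcc (g p) (g x) := by
          rw [Set.mem_uIcc]; right; exact ⟨hc.le, hgp.le⟩
        obtain ⟨y, hy, hgy⟩ := intermediate_value_uIcc (hg.continuousOn) this
        exact hz y (Set.uIcc_subset_Icc hpmem hx hy) hgy
      have habs : ∀ x ∈ Set.uIcc p q, |g x| = g x := by
        intro x hx
        rw [Set.uIcc_of_le hpq] at hx
        exact abs_of_nonneg (hpos x hx)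
      rw [intervalIntegral.integral_congr habs]
      have hle : 0 ≤ (∫ x in p..q, g x) :=
        intervalIntegral.integral_nonneg hpq hpos
      rw [abs_of_nonneg hle]
      nlinarith [sub_nonneg.mpr hpq]

lemma min_bound {A : ℝ → ℝ} {p q : ℝ} (hpq : p ≤ q)
    (hAi : IntervalIntegrable A volume p q)
    (hmi : IntervalIntegrable (fun x => min |A x| 1) volume p q) :
    (∫ x in p..q, min |A x| 1) - ((∫ x in p..q, |A x|) - |∫ x in p..q, A x|)
      ≤ min (q - p) |∫ x in p..q, A x| := by
  have hdef : |∫ x in p..q, A x| ≤ ∫ x in p..q, |A x| :=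
    intervalIntegral.abs_integral_le_integral_abs hpq
  have h1 : (∫ x in p..q, min |A x| 1) ≤ ∫ x in p..q, |A x| :=
    intervalIntegral.integral_mono_on hpq hmi hAi.abs (fun x _ => min_le_left _ _)
  have h2 : (∫ x in p..q, min |A x| 1) ≤ q - p := by
    have := intervalIntegral.integral_mono_on hpq hmi
      (_root_.intervalIntegrable_const (c := (1:ℝ))) (fun x _ => min_le_right _ _)
    simpa using this
  refine le_min (by linarith) (by linarith)

/-- The `A₀`-measure of an interval `[a,b]`: the supremum of `Σ min(|Iᵢ|, |∫_{Iᵢ} A|)`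
over finite families of non-overlapping subintervals of `[a,b]`. -/
noncomputable def A0 (A : ℝ → ℝ) (a b : ℝ) : ℝ :=
  sSup { w : ℝ | ∃ (k : ℕ) (u v : ℕ → ℝ),
    (∀ i < k, a ≤ u i ∧ u i ≤ v i ∧ v i ≤ b) ∧
    (∀ i < k, ∀ i' < k, i ≠ i' → Disjoint (Set.Ioo (u i) (v i)) (Set.Ioo (u i') (v i'))) ∧
    w = ∑ i ∈ Finset.range k, min (v i - u i) |∫ x in (u i)..(v i), A x| }

/-- Elementary bounds for the `A₀`-measure. -/
theorem stmt_7 (A : ℝ → ℝ) (a b : ℝ) (hab : a < b)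
    (hA : IntegrableOn A (Set.Icc a b) volume) :
    (∫ x in a..b, min |A x| 1) ≤ A0 A a b ∧
    A0 A a b ≤ ∫ x in a..b, |A x| ∧
    min |∫ x in a..b, A x| (b - a) ≤ A0 A a b ∧
    A0 A a b ≤ b - a := by
  set S := { w : ℝ | ∃ (k : ℕ) (u v : ℕ → ℝ),
    (∀ i < k, a ≤ u i ∧ u i ≤ v i ∧ v i ≤ b) ∧
    (∀ i < k, ∀ i' < k, i ≠ i' → Disjoint (Set.Ioo (u i) (v i)) (Set.Ioo (u i') (v i'))) ∧
    w = ∑ i ∈ Finset.range k, min (v i - u i) |∫ x in (u i)..(v i), A x| } with hSdef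
  have hA0 : A0 A a b = sSup S := rfl
  have hkey : ∀ (f : ℝ → ℝ), IntegrableOn f (Set.Icc a b) volume →
      ∀ p q, a ≤ p → p ≤ q → q ≤ b → IntervalIntegrable f volume p q := by
    intro f hf p q h1 h2 h3
    rw [intervalIntegrable_iff, Set.uIoc_of_le h2]
    exact hf.mono_set (fun x hx => ⟨h1.trans hx.1.le, hx.2.trans h3⟩)
  -- membership of the single full interval
  have hmem1 : min (b - a) |∫ x in a..b, A x| ∈ S := by
    refine ⟨1, fun _ => a, fun _ => b, ?_, ?_, ?_⟩
    · intro i _; exact ⟨le_refl a, hab.le, le_refl b⟩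
    · intro i hi i' hi' hne
      interval_cases i <;> interval_cases i' <;> simp_all
    · simp
  -- upper bound by ∫ |A|
  have hub_abs : ∀ w ∈ S, w ≤ ∫ x in a..b, |A x| := by
    rintro w ⟨k, u, v, hs, hd, rfl⟩
    calc ∑ i ∈ Finset.range k, min (v i - u i) |∫ x in (u i)..(v i), A x|
        ≤ ∑ i ∈ Finset.range k, ∫ x in Set.Ioc (u i) (v i), |A x| := by
          apply Finset.sum_le_sum
          intro i hi
          have hi' := Finset.mem_range.mp hi
          obtain ⟨h1, h2, h3⟩ := hs i hi'
          calc min (v i - u i) |∫ x in (u i)..(v i), A x|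
              ≤ |∫ x in (u i)..(v i), A x| := min_le_right _ _
            _ ≤ ∫ x in (u i)..(v i), |A x| :=
                intervalIntegral.abs_integral_le_integral_abs h2
            _ = ∫ x in Set.Ioc (u i) (v i), |A x| := intervalIntegral.integral_of_le h2
      _ ≤ ∫ x in Set.Ioc a b, |A x| := sum_key hA.abs (fun x => abs_nonneg _) hs hd
      _ = ∫ x in a..b, |A x| := (intervalIntegral.integral_of_le hab.le).symm
  -- upper bound by b - a
  have hub_len : ∀ w ∈ S, w ≤ b - a := by
    rintro w ⟨k, u, v, hs, hd, rfl⟩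
    have hconst : IntegrableOn (fun _ : ℝ => (1:ℝ)) (Set.Icc a b) volume := by
      apply (integrableOn_const_iff (C := (1:ℝ))).mpr
      right
      simp [Real.volume_Icc]
    calc ∑ i ∈ Finset.range k, min (v i - u i) |∫ x in (u i)..(v i), A x|
        ≤ ∑ i ∈ Finset.range k, ∫ x in Set.Ioc (u i) (v i), (1:ℝ) := by
          apply Finset.sum_le_sum
          intro i hi
          have hi' := Finset.mem_range.mp hi
          obtain ⟨h1, h2, h3⟩ := hs i hi'
          calc min (v i - u i) |∫ x in (u i)..(v i), A x|
              ≤ v i - u i := min_le_left _ _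
            _ = ∫ x in Set.Ioc (u i) (v i), (1:ℝ) := by
                simp [Real.volume_Ioc, ENNReal.toReal_ofReal (sub_nonneg.mpr h2), h2]
      _ ≤ ∫ x in Set.Ioc a b, (1:ℝ) := sum_key hconst (fun _ => zero_le_one) hs hd
      _ = b - a := by
          simp [Real.volume_Ioc, ENNReal.toReal_ofReal (sub_nonneg.mpr hab.le), hab.le]
  have hbdd : BddAbove S := ⟨∫ x in a..b, |A x|, hub_abs⟩
  have hne : S.Nonempty := ⟨_, hmem1⟩
  refine ⟨?_, ?_, ?_, ?_⟩
  · -- the hard lower bound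
    rw [hA0]
    have hba : (0:ℝ) < b - a := sub_pos.mpr hab
    have hminInt : IntegrableOn (fun x => min |A x| 1) (Set.Icc a b) volume := by
      refine Integrable.mono' (integrable_const 1)
        (hA.aestronglyMeasurable.norm.inf aestronglyMeasurable_const) ?_
      refine Filter.Eventually.of_forall fun x => ?_
      rw [Real.norm_eq_abs, abs_le]
      constructor
      · have := le_min (abs_nonneg (A x)) zero_le_one
        linarith
      · exact min_le_right _ _
    refine le_of_forall_pos_le_add ?_
    intro ε hε
    set A' := (Set.Icc a b).indicator A with hA'def
    have hA'int : Integrable A' volume := (integrable_indicator_iff measurableSet_Icc).mpr hA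
    obtain ⟨g, hgsupp, hgL1, hgc, hgint⟩ :=
      hA'int.exists_hasCompactSupport_integral_sub_le (show (0:ℝ) < ε/8 by linarith)
    set ε' := ε / (4 * (b - a)) with hε'def
    have hε' : 0 < ε' := by positivity
    have hgu := hgsupp.uniformContinuous_of_continuous hgc
    obtain ⟨δ, hδ, hδ'⟩ := Metric.uniformContinuous_iff.mp hgu ε' hε'
    obtain ⟨n, hn⟩ := exists_nat_gt ((b - a)/δ)
    have hn0 : 0 < (n:ℝ) := lt_trans (by positivity) hn
    have hn0' : (n:ℝ) ≠ 0 := ne_of_gt hn0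
    set Δ := (b - a) / n with hΔdef
    have hΔpos : 0 < Δ := by positivity
    have hΔδ : Δ < δ := by
      rw [hΔdef, div_lt_iff₀ hn0]
      calc b - a = ((b-a)/δ) * δ := (div_mul_cancel₀ _ (ne_of_gt hδ)).symm
        _ < n * δ := mul_lt_mul_of_pos_right hn hδ
        _ = δ * n := mul_comm _ _
    set t : ℕ → ℝ := fun i => a + i * Δ with htdef
    have ht0 : t 0 = a := by simp [htdef]
    have htn : t n = b := by
      rw [htdef]
      show a + (n:ℝ) * Δ = b
      rw [hΔdef, mul_div_assoc', mul_div_right_comm, div_self hn0', one_mul]; ring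
    have htstep : ∀ i : ℕ, t (i+1) - t i = Δ := by
      intro i
      simp only [htdef]
      push_cast
      ring
    have htmono : Monotone t := by
      intro i j hij
      simp only [htdef]
      have : (i:ℝ) ≤ j := Nat.cast_le.mpr hij
      nlinarith
    have hsin : ∀ i < n, a ≤ t i ∧ t i ≤ t (i+1) ∧ t (i+1) ≤ b := by
      intro i hi
      refine ⟨?_, htmono (Nat.le_succ i), ?_⟩
      · rw [← ht0]; exact htmono (Nat.zero_le i)
      · rw [← htn]; exact htmono hi
    have hdisj : ∀ i < n, ∀ i' < n, i ≠ i' →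
        Disjoint (Set.Ioo (t i) (t (i+1))) (Set.Ioo (t i') (t (i'+1))) := by
      have key2 : ∀ i i' : ℕ, i < i' →
          Disjoint (Set.Ioo (t i) (t (i+1))) (Set.Ioo (t i') (t (i'+1))) := by
        intro i i' h
        rw [Set.disjoint_left]
        rintro x ⟨hx1, hx2⟩ ⟨hx3, hx4⟩
        have := htmono (show i + 1 ≤ i' from h)
        linarith
      intro i _ i' _ hne
      rcases hne.lt_or_gt with h | h
      · exact key2 _ _ h
      · exact (key2 _ _ h).symm
    -- integrability on subintervals
    have hAi : ∀ i < n, IntervalIntegrable A volume (t i) (t (i+1))  := fun i hi =>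
      hkey A hA _ _ (hsin i hi).1 (hsin i hi).2.1 (hsin i hi).2.2
    have hMi : ∀ i < n, IntervalIntegrable (fun x => min |A x| 1) volume (t i) (t (i+1)) :=
      fun i hi => hkey _ hminInt _ _ (hsin i hi).1 (hsin i hi).2.1 (hsin i hi).2.2
    have hgi : ∀ p q : ℝ, IntervalIntegrable g volume p q := fun p q =>
      hgc.intervalIntegrable p q
    have hAgi : ∀ i < n, IntervalIntegrable (fun x => |A x - g x|) volume (t i) (t (i+1)) :=
      fun i hi => ((hAi i hi).sub (hgi _ _)).abs
    -- per-interval estimate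
    have hper : ∀ i < n, (∫ x in t i..t (i+1), min |A x| 1)
        ≤ min (t (i+1) - t i) |∫ x in t i..t (i+1), A x| + ε' * (t (i+1) - t i)
          + 2 * ∫ x in t i..t (i+1), |A x - g x| := by
      intro i hi
      have hpq : t i ≤ t (i+1) := (hsin i hi).2.1
      have h7 := min_bound hpq (hAi i hi) (hMi i hi)
      have hosc : ∀ x ∈ Set.Icc (t i) (t (i+1)), ∀ y ∈ Set.Icc (t i) (t (i+1)),
          |g x - g y| ≤ ε' := by
        intro x hx y hy
        have hdist : dist x y < δ := by
          rw [Real.dist_eq, abs_sub_lt_iff]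
          have := hx.1; have := hx.2; have := hy.1; have := hy.2
          have := htstep i
          constructor <;> linarith
        have := hδ' hdist
        rw [Real.dist_eq] at this
        exact this.le
      have h6 := cont_deficit hgc hpq hosc
      have hsubint : IntervalIntegrable (fun x => A x - g x) volume (t i) (t (i+1)) :=
        (hAi i hi).sub (hgi _ _)
      have ha1 : (∫ x in t i..t (i+1), |A x|)
          ≤ (∫ x in t i..t (i+1), |g x|) + ∫ x in t i..t (i+1), |A x - g x| := by
        have hmono := intervalIntegral.integral_mono_on hpq (hAi i hi).abs
          ((hgi _ _).abs.add hsubint.abs)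
          (fun x _ => by
            calc |A x| = |g x + (A x - g x)| := by ring_nf
              _ ≤ |g x| + |A x - g x| := abs_add_le _ _)
        rwa [intervalIntegral.integral_add (hgi _ _).abs hsubint.abs] at hmono
      have hb1 : |∫ x in t i..t (i+1), g x|
          ≤ |∫ x in t i..t (i+1), A x| + ∫ x in t i..t (i+1), |A x - g x| := by
        have h1 : |∫ x in t i..t (i+1), g x| - |∫ x in t i..t (i+1), A x|
            ≤ |(∫ x in t i..t (i+1), g x) - ∫ x in t i..t (i+1), A x| :=
          abs_sub_abs_le_abs_sub _ _
        have h2 : (∫ x in t i..t (i+1), g x) - ∫ x in t i..t (i+1), A x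
            = ∫ x in t i..t (i+1), (g x - A x) :=
          (intervalIntegral.integral_sub (hgi _ _) (hAi i hi)).symm
        have h3 : |∫ x in t i..t (i+1), (g x - A x)| ≤ ∫ x in t i..t (i+1), |g x - A x| :=
          intervalIntegral.abs_integral_le_integral_abs hpq
        have h4 : (∫ x in t i..t (i+1), |g x - A x|) = ∫ x in t i..t (i+1), |A x - g x| :=
          intervalIntegral.integral_congr (fun x _ => abs_sub_comm _ _)
        rw [h2] at h1
        linarith
      linarith
    -- sum the per-interval estimates
    have hsum := Finset.sum_le_sum
      (fun i hi => hper i (Finset.mem_range.mp hi))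
    have hL : ∑ i ∈ Finset.range n, ∫ x in t i..t (i+1), min |A x| 1
        = ∫ x in a..b, min |A x| 1 := by
      rw [intervalIntegral.sum_integral_adjacent_intervals hMi, ht0, htn]
    have hR1 : ∑ i ∈ Finset.range n, (t (i+1) - t i) = b - a := by
      rw [Finset.sum_range_sub t, ht0, htn]
    have hR2 : ∑ i ∈ Finset.range n, ∫ x in t i..t (i+1), |A x - g x|
        = ∫ x in a..b, |A x - g x| := by
      rw [intervalIntegral.sum_integral_adjacent_intervals hAgi, ht0, htn]
    -- the element of S
    set w := ∑ i ∈ Finset.range n, min (t (i+1) - t i) |∫ x in t i..t (i+1), A x| with hwdef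
    have hw : w ∈ S := ⟨n, t, fun i => t (i+1), hsin, hdisj, rfl⟩
    have hwle : w ≤ sSup S := le_csSup hbdd hw
    -- bound on ∫ |A - g| over [a,b]
    have hAg_le : (∫ x in a..b, |A x - g x|) ≤ ε/8 := by
      rw [intervalIntegral.integral_of_le hab.le]
      have heq : (∫ x in Set.Ioc a b, |A x - g x|) = ∫ x in Set.Ioc a b, |A' x - g x| := by
        apply MeasureTheory.setIntegral_congr_fun measurableSet_Ioc
        intro x hx
        have : A' x = A x := Set.indicator_of_mem (Set.Ioc_subset_Icc_self hx) A
        simp [this]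
      rw [heq]
      calc (∫ x in Set.Ioc a b, |A' x - g x|) ≤ ∫ x, |A' x - g x| :=
            MeasureTheory.setIntegral_le_integral ((hA'int.sub hgint).abs)
              (Filter.Eventually.of_forall fun x => abs_nonneg _)
        _ ≤ ε/8 := by
            have : (∫ x, |A' x - g x|) = ∫ x, ‖A' x - g x‖ := by
              simp [Real.norm_eq_abs]
            rw [this]
            exact hgL1
    -- combine
    have hsplit : ∑ i ∈ Finset.range n,
        (min (t (i+1) - t i) |∫ x in t i..t (i+1), A x| + ε' * (t (i+1) - t i)
          + 2 * ∫ x in t i..t (i+1), |A x - g x|)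
        = w + ε' * (b - a) + 2 * ∫ x in a..b, |A x - g x| := by
      rw [Finset.sum_add_distrib, Finset.sum_add_distrib, ← Finset.mul_sum, ← Finset.mul_sum,
        hR1, hR2]
    rw [hL, hsplit] at hsum
    have hε'ba : ε' * (b - a) = ε/4 := by
      rw [hε'def]
      field_simp
    calc (∫ x in a..b, min |A x| 1) ≤ w + ε' * (b - a) + 2 * ∫ x in a..b, |A x - g x| := hsum
      _ ≤ sSup S + ε/4 + 2 * (ε/8) := by
          have h2' : 2 * (∫ x in a..b, |A x - g x|) ≤ 2 * (ε/8) := by linarith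
          linarith [hwle, hε'ba]
      _ ≤ sSup S + ε := by linarith
  · rw [hA0]; exact csSup_le hne hub_abs
  · rw [hA0, min_comm]; exact le_csSup hbdd hmem1
  · rw [hA0]; exact csSup_le hne hub_len
end

section
/- Define the discrepancy norm DA(I,t) = sup over subintervals I1 ⊂ I with t|I| ≤ |I1| ≤ |I| of |E_{I1}A - E_I A|. If t1 < t2 then DA(I,t1) ≥ DA(I,t2). Moreover, if t < 1/10, then DA(I,2t) ≥ (1/5)·DA(I,t). -/
open MeasureTheory intervalIntegral

/-- Average of `A` over `[u,v]`. -/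
noncomputable def avg (A : ℝ → ℝ) (u v : ℝ) : ℝ := (∫ x in u..v, A x) / (v - u)

/-- The `t`-norm of discrepancy of the interval `[a,b]`. -/
noncomputable def DA (A : ℝ → ℝ) (a b t : ℝ) : ℝ :=
  sSup { d : ℝ | ∃ u v, a ≤ u ∧ u < v ∧ v ≤ b ∧ t * (b - a) ≤ v - u ∧
    d = |avg A u v - avg A a b| }

lemma intInt {A : ℝ → ℝ} {a b : ℝ} (hA : IntegrableOn A (Set.Icc a b) volume)
    {u v : ℝ} (hu : a ≤ u) (huv : u ≤ v) (hv : v ≤ b) :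
    IntervalIntegrable A volume u v := by
  apply IntegrableOn.intervalIntegrable
  rw [Set.uIcc_of_le huv]
  exact hA.mono_set (Set.Icc_subset_Icc hu hv)

lemma int_bound {A : ℝ → ℝ} {a b : ℝ} (hA : IntegrableOn A (Set.Icc a b) volume)
    {u v : ℝ} (hu : a ≤ u) (huv : u ≤ v) (hv : v ≤ b) :
    |∫ x in u..v, A x| ≤ ∫ x in Set.Icc a b, |A x| := by
  have h1 : |∫ x in u..v, A x| ≤ ∫ x in u..v, |A x| :=
    intervalIntegral.abs_integral_le_integral_abs huv
  have h2 : (∫ x in u..v, |A x|) = ∫ x in Set.Ioc u v, |A x| :=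
    intervalIntegral.integral_of_le huv
  have h3 : (∫ x in Set.Ioc u v, |A x|) ≤ ∫ x in Set.Icc a b, |A x| := by
    apply setIntegral_mono_set hA.abs
    · filter_upwards with x using abs_nonneg _
    · exact (Set.Ioc_subset_Icc_self.trans (Set.Icc_subset_Icc hu hv)).eventuallyLE
  linarith

lemma DA_bddAbove {A : ℝ → ℝ} {a b t : ℝ} (hab : a < b) (ht : 0 < t)
    (hA : IntegrableOn A (Set.Icc a b) volume) :
    BddAbove { d : ℝ | ∃ u v, a ≤ u ∧ u < v ∧ v ≤ b ∧ t * (b - a) ≤ v - u ∧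
      d = |avg A u v - avg A a b| } := by
  set M := ∫ x in Set.Icc a b, |A x| with hM
  have hM0 : 0 ≤ M := setIntegral_nonneg measurableSet_Icc (fun x _ => abs_nonneg _)
  refine ⟨M / (t * (b - a)) + |avg A a b|, ?_⟩
  rintro d ⟨u, v, hu, huv, hv, hlen, rfl⟩
  have htb : 0 < t * (b - a) := mul_pos ht (by linarith)
  have hL : (0:ℝ) < v - u := by linarith
  have h1 : |avg A u v| ≤ M / (v - u) := by
    rw [avg, abs_div, abs_of_pos hL]
    gcongr
    exact int_bound hA hu huv.le hv
  have h2 : M / (v - u) ≤ M / (t * (b - a)) := by gcongr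
  calc |avg A u v - avg A a b| ≤ |avg A u v| + |avg A a b| := abs_sub _ _
    _ ≤ M / (t * (b - a)) + |avg A a b| := by linarith

lemma DA_zero_mem {A : ℝ → ℝ} {a b t : ℝ} (hab : a < b) (ht : t ≤ 1) :
    (0:ℝ) ∈ { d : ℝ | ∃ u v, a ≤ u ∧ u < v ∧ v ≤ b ∧ t * (b - a) ≤ v - u ∧
      d = |avg A u v - avg A a b| } :=
  ⟨a, b, le_refl a, hab, le_refl b, by nlinarith, by simp⟩

/-- Monotonicity of the discrepancy norm in `t`, and the doubling inequality
`DA(I,2t) ≥ (1/5)·DA(I,t)` for `t < 1/10`. -/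
theorem stmt_8 (A : ℝ → ℝ) (a b : ℝ) (hab : a < b)
    (hA : IntegrableOn A (Set.Icc a b) volume) :
    (∀ t1 t2 : ℝ, 0 < t1 → t1 < t2 → t2 ≤ 1 → DA A a b t2 ≤ DA A a b t1) ∧
    (∀ t : ℝ, 0 < t → t < 1 / 10 → (1 / 5) * DA A a b t ≤ DA A a b (2 * t)) := by
  constructor
  · intro t1 t2 ht1 h12 ht2
    apply csSup_le_csSup (DA_bddAbove hab ht1 hA) ⟨0, DA_zero_mem hab ht2⟩
    rintro d ⟨u, v, hu, huv, hv, hlen, rfl⟩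
    exact ⟨u, v, hu, huv, hv, by nlinarith, rfl⟩
  · intro t ht ht10
    have h2t : 2 * t ≤ 1 := by linarith
    have hDA2 : 0 ≤ DA A a b (2 * t) :=
      le_csSup (DA_bddAbove hab (by linarith) hA) (DA_zero_mem hab h2t)
    have key : DA A a b t ≤ 5 * DA A a b (2 * t) := by
      apply csSup_le ⟨0, DA_zero_mem hab (by linarith)⟩
      rintro d ⟨u, v, hu, huv, hv, hlen, rfl⟩
      set L := v - u with hLdef
      have hL : 0 < L := by linarith
      have hba : (0:ℝ) < b - a := by linarith
      have htL : t * (b - a) ≤ L := hlen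
      by_cases hcase : 2 * t * (b - a) ≤ L
      · have hmem : |avg A u v - avg A a b| ≤ DA A a b (2 * t) :=
          le_csSup (DA_bddAbove hab (by linarith) hA) ⟨u, v, hu, huv, hv, hcase, rfl⟩
        linarith
      · push_neg at hcase
        have h5L : 5 * L < b - a := by nlinarith
        by_cases hright : v + 2 * L ≤ b
        · -- adjacent interval on the right
          have hiv : IntervalIntegrable A volume u v := intInt hA hu huv.le hv
          have hiw : IntervalIntegrable A volume v (v + 2 * L) :=
            intInt hA (by linarith) (by linarith) hright
          have hsum : (∫ x in u..v, A x) + (∫ x in v..(v + 2 * L), A x)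
              = ∫ x in u..(v + 2 * L), A x :=
            intervalIntegral.integral_add_adjacent_intervals hiv hiw
          have hkey : avg A u v = 3 * avg A u (v + 2 * L) - 2 * avg A v (v + 2 * L) := by
            rw [avg, avg, avg, ← hsum]
            have e1 : v + 2 * L - u = 3 * L := by rw [hLdef]; ring
            have e2 : v + 2 * L - v = 2 * L := by ring
            rw [e1, e2, ← hLdef]
            field_simp
            ring
          have c1 : |avg A v (v + 2 * L) - avg A a b| ≤ DA A a b (2 * t) :=
            le_csSup (DA_bddAbove hab (by linarith) hA)
              ⟨v, v + 2 * L, by linarith, by linarith, hright, by nlinarith, rfl⟩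
          have c2 : |avg A u (v + 2 * L) - avg A a b| ≤ DA A a b (2 * t) :=
            le_csSup (DA_bddAbove hab (by linarith) hA)
              ⟨u, v + 2 * L, hu, by linarith, hright, by nlinarith, rfl⟩
          have habs : |avg A u v - avg A a b| ≤
              3 * |avg A u (v + 2 * L) - avg A a b| + 2 * |avg A v (v + 2 * L) - avg A a b| := by
            rw [hkey]
            have : (3 * avg A u (v + 2 * L) - 2 * avg A v (v + 2 * L)) - avg A a b
                = 3 * (avg A u (v + 2 * L) - avg A a b) - 2 * (avg A v (v + 2 * L) - avg A a b) := by
              ring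
            rw [this]
            calc |3 * (avg A u (v + 2 * L) - avg A a b) - 2 * (avg A v (v + 2 * L) - avg A a b)|
                ≤ |3 * (avg A u (v + 2 * L) - avg A a b)| + |2 * (avg A v (v + 2 * L) - avg A a b)| :=
                  abs_sub _ _
              _ = 3 * |avg A u (v + 2 * L) - avg A a b| + 2 * |avg A v (v + 2 * L) - avg A a b| := by
                  rw [abs_mul, abs_mul]; norm_num
          linarith
        · -- adjacent interval on the left
          push_neg at hright
          have hleft : a < u - 2 * L := by linarith
          have hiw : IntervalIntegrable A volume (u - 2 * L) u :=
            intInt hA hleft.le (by linarith) (by linarith)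
          have hiv : IntervalIntegrable A volume u v := intInt hA hu huv.le hv
          have hsum : (∫ x in (u - 2 * L)..u, A x) + (∫ x in u..v, A x)
              = ∫ x in (u - 2 * L)..v, A x :=
            intervalIntegral.integral_add_adjacent_intervals hiw hiv
          have hkey : avg A u v = 3 * avg A (u - 2 * L) v - 2 * avg A (u - 2 * L) u := by
            rw [avg, avg, avg, ← hsum]
            have e1 : v - (u - 2 * L) = 3 * L := by rw [hLdef]; ring
            have e2 : u - (u - 2 * L) = 2 * L := by ring
            rw [e1, e2, ← hLdef]
            field_simp
            ring
          have c1 : |avg A (u - 2 * L) u - avg A a b| ≤ DA A a b (2 * t) :=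
            le_csSup (DA_bddAbove hab (by linarith) hA)
              ⟨u - 2 * L, u, hleft.le, by linarith, by linarith, by nlinarith, rfl⟩
          have c2 : |avg A (u - 2 * L) v - avg A a b| ≤ DA A a b (2 * t) :=
            le_csSup (DA_bddAbove hab (by linarith) hA)
              ⟨u - 2 * L, v, hleft.le, by linarith, hv, by nlinarith, rfl⟩
          have habs : |avg A u v - avg A a b| ≤
              3 * |avg A (u - 2 * L) v - avg A a b| + 2 * |avg A (u - 2 * L) u - avg A a b| := by
            rw [hkey]
            have : (3 * avg A (u - 2 * L) v - 2 * avg A (u - 2 * L) u) - avg A a b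
                = 3 * (avg A (u - 2 * L) v - avg A a b) - 2 * (avg A (u - 2 * L) u - avg A a b) := by
              ring
            rw [this]
            calc |3 * (avg A (u - 2 * L) v - avg A a b) - 2 * (avg A (u - 2 * L) u - avg A a b)|
                ≤ |3 * (avg A (u - 2 * L) v - avg A a b)| + |2 * (avg A (u - 2 * L) u - avg A a b)| :=
                  abs_sub _ _
              _ = 3 * |avg A (u - 2 * L) v - avg A a b| + 2 * |avg A (u - 2 * L) u - avg A a b| := by
                  rw [abs_mul, abs_mul]; norm_num
          linarith
    linarith
end

section
/- For every interval I and integrable A: A_0(I) ≥ |I|·min(1/100, DA(I,1/10)/100), where DA(I,1/10) is the discrepancy norm and A_0 the A_0-measure. -/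
open MeasureTheory intervalIntegral

lemma A0_bdd (A : ℝ → ℝ) (a b : ℝ) (hab : a ≤ b) :
    BddAbove { w : ℝ | ∃ (k : ℕ) (u v : ℕ → ℝ),
    (∀ i < k, a ≤ u i ∧ u i ≤ v i ∧ v i ≤ b) ∧
    (∀ i < k, ∀ i' < k, i ≠ i' → Disjoint (Set.Ioo (u i) (v i)) (Set.Ioo (u i') (v i'))) ∧
    w = ∑ i ∈ Finset.range k, min (v i - u i) |∫ x in (u i)..(v i), A x| } := by
  refine ⟨b - a, ?_⟩
  rintro w ⟨k, u, v, hin, hdisj, rfl⟩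
  have h1 : ∑ i ∈ Finset.range k, min (v i - u i) |∫ x in (u i)..(v i), A x|
      ≤ ∑ i ∈ Finset.range k, (v i - u i) :=
    Finset.sum_le_sum fun i _ => min_le_left _ _
  have h2 : ∑ i ∈ Finset.range k, (v i - u i) ≤ b - a := by
    have hvol : ∀ i ∈ Finset.range k, volume (Set.Ioo (u i) (v i)) = ENNReal.ofReal (v i - u i) :=
      fun i _ => Real.volume_Ioo
    have hdisj' : (↑(Finset.range k) : Set ℕ).Pairwise
        (Function.onFun Disjoint fun i => Set.Ioo (u i) (v i)) := by
      intro i hi j hj hij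
      exact hdisj i (Finset.mem_range.mp hi) j (Finset.mem_range.mp hj) hij
    have hmeas : ∀ i ∈ Finset.range k, MeasurableSet (Set.Ioo (u i) (v i)) :=
      fun i _ => measurableSet_Ioo
    have hunion := measure_biUnion_finset hdisj' hmeas (μ := volume)
    have hsub : (⋃ i ∈ Finset.range k, Set.Ioo (u i) (v i)) ⊆ Set.Icc a b := by
      intro x hx
      simp only [Set.mem_iUnion] at hx
      obtain ⟨i, hi, hx⟩ := hx
      obtain ⟨h1, h2, h3⟩ := hin i (Finset.mem_range.mp hi)
      exact ⟨le_of_lt (lt_of_le_of_lt h1 hx.1), le_of_lt (lt_of_lt_of_le hx.2 h3)⟩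
    have hle : ∑ i ∈ Finset.range k, volume (Set.Ioo (u i) (v i)) ≤ ENNReal.ofReal (b - a) := by
      rw [← hunion]
      calc volume (⋃ i ∈ Finset.range k, Set.Ioo (u i) (v i)) ≤ volume (Set.Icc a b) :=
            measure_mono hsub
        _ = ENNReal.ofReal (b - a) := Real.volume_Icc
    have := ENNReal.toReal_mono (by simp) hle
    rw [ENNReal.toReal_sum (fun i _ => by rw [hvol i ‹_›]; exact ENNReal.ofReal_ne_top)] at this
    calc ∑ i ∈ Finset.range k, (v i - u i)
        ≤ ∑ i ∈ Finset.range k, (volume (Set.Ioo (u i) (v i))).toReal := by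
          apply Finset.sum_le_sum
          intro i hi
          obtain ⟨ha1, ha2, ha3⟩ := hin i (Finset.mem_range.mp hi)
          rw [hvol i hi, ENNReal.toReal_ofReal (by linarith)]
      _ ≤ (ENNReal.ofReal (b - a)).toReal := this
      _ = b - a := ENNReal.toReal_ofReal (by linarith)
  linarith
lemma single_le_A0 (A : ℝ → ℝ) (a b u v : ℝ) (hab : a ≤ b)
    (hau : a ≤ u) (huv : u ≤ v) (hvb : v ≤ b) :
    min (v - u) |∫ x in u..v, A x| ≤ A0 A a b := by
  apply le_csSup (A0_bdd A a b hab)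
  refine ⟨1, fun _ => u, fun _ => v, fun i _ => ⟨hau, huv, hvb⟩, ?_, ?_⟩
  · intro i hi i' hi' hne; omega
  · simp
lemma A0_nonneg (A : ℝ → ℝ) (a b : ℝ) (hab : a ≤ b) : 0 ≤ A0 A a b := by
  apply le_csSup (A0_bdd A a b hab)
  exact ⟨0, fun _ => 0, fun _ => 0, by omega, by omega, by simp⟩
lemma core (A : ℝ → ℝ) (a b u v : ℝ) (hab : a < b) (hau : a ≤ u) (huv : u < v) (hvb : v ≤ b)
    (hlen : (b - a) / 10 ≤ v - u) :
    (b - a) * min 1 |avg A u v - avg A a b| / 100 ≤ A0 A a b := by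
  set M := avg A a b with hM
  set m := avg A u v with hm
  set d := |m - M| with hd
  have hd0 : 0 ≤ d := abs_nonneg _
  have hba : (0:ℝ) < b - a := by linarith
  have hvu : (0:ℝ) < v - u := by linarith
  have hintab : |∫ x in a..b, A x| = (b - a) * |M| := by
    have : (∫ x in a..b, A x) = M * (b - a) := by
      rw [hM, avg]; field_simp
    rw [this, abs_mul, abs_of_pos hba]; ring
  have hintuv : |∫ x in u..v, A x| = (v - u) * |m| := by
    have : (∫ x in u..v, A x) = m * (v - u) := by
      rw [hm, avg]; field_simp
    rw [this, abs_mul, abs_of_pos hvu]; ring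
  have hmin1 : min 1 d ≤ 1 := min_le_left _ _
  have hmind : min 1 d ≤ d := min_le_right _ _
  have hmin0 : 0 ≤ min 1 d := le_min zero_le_one hd0
  by_cases h : d / 40 ≤ |M|
  · have h1 := single_le_A0 A a b a b (le_of_lt hab) le_rfl (le_of_lt hab) le_rfl
    rw [hintab] at h1
    refine le_trans (le_min ?_ ?_) h1 <;> nlinarith [abs_nonneg M]
  · push_neg at h
    have hmabs : 39 * d / 40 ≤ |m| := by
      have htri : |m - M| ≤ |m| + |M| := abs_sub _ _
      linarith
    have h1 := single_le_A0 A a b u v (le_of_lt hab) hau (le_of_lt huv) hvb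
    rw [hintuv] at h1
    refine le_trans (le_min ?_ ?_) h1
    · nlinarith
    · nlinarith [mul_nonneg (le_of_lt hvu) hd0, mul_le_mul_of_nonneg_left hmind (le_of_lt hba)]

/-- The `A₀`-measure dominates the discrepancy norm:
`A₀(I) ≥ |I|·min(1/100, DA(I,1/10)/100)`. -/
theorem stmt_9 (A : ℝ → ℝ) (a b : ℝ) (hab : a < b)
    (hA : IntegrableOn A (Set.Icc a b) volume) :
    (b - a) * min (1 / 100) (DA A a b (1 / 10) / 100) ≤ A0 A a b := by
  have hba : (0:ℝ) < b - a := by linarith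
  have hA0 : 0 ≤ A0 A a b := A0_nonneg A a b (le_of_lt hab)
  by_cases hc : (b - a) / 100 ≤ A0 A a b
  · have : min (1 / 100 : ℝ) (DA A a b (1 / 10) / 100) ≤ 1 / 100 := min_le_left _ _
    nlinarith
  · push_neg at hc
    have hkey : DA A a b (1 / 10) ≤ 100 * A0 A a b / (b - a) := by
      apply Real.sSup_le
      · rintro d ⟨u, v, hau, huv, hvb, hlen, rfl⟩
        have hc' := core A a b u v hab hau huv hvb (by linarith)
        have h1 : min 1 |avg A u v - avg A a b| = |avg A u v - avg A a b| := by
          rcases min_cases 1 |avg A u v - avg A a b| with ⟨he, hle⟩ | ⟨he, _⟩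
          · rw [he] at hc'; nlinarith
          · exact he
        rw [h1] at hc'
        rw [le_div_iff₀ hba]; nlinarith
      · positivity
    have h2 : min (1 / 100 : ℝ) (DA A a b (1 / 10) / 100) ≤ DA A a b (1 / 10) / 100 :=
      min_le_right _ _
    have h3 : (b - a) * (DA A a b (1 / 10) / 100) ≤ A0 A a b := by
      rw [le_div_iff₀ hba] at hkey
      nlinarith
    nlinarith
end
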